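/- For every seven-dimensional filiform Lie algebra g over a field K of characteristic different from 2, there exist a, b, c, d ∈ K such that g is isomorphic to g^7_{abcd}. -/

import Mathlib

variable (K : Type*) [Field K]

/-- The bracket of the Lie algebra `g^7_{abcd}` on `K^7` (indices `0..6` correspond to
`e_1..e_7`): the only nonzero brackets among basis vectors are `⁅e_1, e_{i+1}⁆ = e_i` for
`2 ≤ i ≤ 6`, `⁅e_4, e_7⁆ = a e_2`, `⁅e_5, e_6⁆ = b e_2`, `⁅e_5, e_7⁆ = c e_2 + (a+b) e_3`
and `⁅e_6, e_7⁆ = d e_2 + c e_3 + (a+b) e_4`. -/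
def g7b (a b c d : K) (x y : Fin 7 → K) : Fin 7 → K :=
  ![0,
    x 0 * y 2 - x 2 * y 0 + a * (x 3 * y 6 - x 6 * y 3) + b * (x 4 * y 5 - x 5 * y 4)
      + c * (x 4 * y 6 - x 6 * y 4) + d * (x 5 * y 6 - x 6 * y 5),
    x 0 * y 3 - x 3 * y 0 + (a + b) * (x 4 * y 6 - x 6 * y 4) + c * (x 5 * y 6 - x 6 * y 5),
    x 0 * y 4 - x 4 * y 0 + (a + b) * (x 5 * y 6 - x 6 * y 5),
    x 0 * y 5 - x 5 * y 0,
    x 0 * y 6 - x 6 * y 0,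
    0]

/-- The Lie algebras `g^7_{abcd}` and `g^7_{ABCD}` are isomorphic: there is a bijective
linear map preserving the brackets. -/
def g7Iso (a b c d A B C D : K) : Prop :=
  ∃ f : (Fin 7 → K) ≃ₗ[K] (Fin 7 → K),
    ∀ x y, f (g7b K a b c d x y) = g7b K A B C D (f x) (f y)

/-- `L` is an `n`-dimensional filiform Lie algebra over `K`. -/
def IsFiliform (L : Type*) [LieRing L] [LieAlgebra K L] (n : ℕ) : Prop :=
  Module.finrank K L = n ∧
    ∀ k : ℕ, 2 ≤ k → k ≤ n →
      Module.finrank K (LieModule.lowerCentralSeries K L L (k - 1)) = n - k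

/-- The Lie algebra `L` is isomorphic to `g^7_{abcd}`. -/
def g7IsoTo (L : Type*) [LieRing L] [LieAlgebra K L] (a b c d : K) : Prop :=
  ∃ f : L ≃ₗ[K] (Fin 7 → K), ∀ u v : L, f ⁅u, v⁆ = g7b K a b c d (f u) (f v)

/-! ### Auxiliary material for the proof -/

open Module

section AuxLin

variable {K} {V : Type*} [AddCommGroup V] [Module K V] [FiniteDimensional K V]

theorem F7.exists_mem_notMem {W W' : Submodule K V}
    (h : finrank K W' < finrank K W) : ∃ v, v ∈ W ∧ v ∉ W' := by
  by_contra h'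
  push_neg at h'
  exact absurd (Submodule.finrank_mono fun x hx => h' x hx) (not_le.mpr h)

theorem F7.decomp_step {W W' : Submodule K V} {v : V} (hle : W' ≤ W) (hv : v ∈ W)
    (hv' : v ∉ W') (hrank : finrank K W = finrank K W' + 1) :
    ∀ w ∈ W, ∃ (μ : K) (c : V), c ∈ W' ∧ w = μ • v + c := by
  have hspan : Submodule.span K {v} ⊔ W' = W := by
    apply Submodule.eq_of_le_of_finrank_le
      (sup_le ((Submodule.span_singleton_le_iff_mem v W).mpr hv) hle)
    have hlt : W' < Submodule.span K {v} ⊔ W' :=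
      lt_of_le_of_ne le_sup_right (fun hEq => hv' (hEq ▸ (le_sup_left
        (a := Submodule.span K {v}) (b := W') (Submodule.mem_span_singleton_self v))))
    have := Submodule.finrank_lt_finrank_of_lt hlt
    omega
  intro w hw
  rw [← hspan] at hw
  obtain ⟨p, hp, q, hq, hpq⟩ := Submodule.mem_sup.mp hw
  obtain ⟨μ, rfl⟩ := Submodule.mem_span_singleton.mp hp
  exact ⟨μ, q, hq, hpq.symm⟩

end AuxLin

section AuxG7b

variable {K}

theorem F7.cv5 {α : Type*} (a0 a1 a2 a3 a4 a5 a6 : α) :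
    ![a0,a1,a2,a3,a4,a5,a6] (5 : Fin 7) = a5 := rfl

theorem F7.cv6 {α : Type*} (a0 a1 a2 a3 a4 a5 a6 : α) :
    ![a0,a1,a2,a3,a4,a5,a6] (6 : Fin 7) = a6 := rfl

theorem F7.g7b_add_left (a b c d : K) (x x' y : Fin 7 → K) :
    g7b K a b c d (x + x') y = g7b K a b c d x y + g7b K a b c d x' y := by
  funext i
  fin_cases i <;> simp [g7b, F7.cv5, F7.cv6] <;> ring

theorem F7.g7b_smul_left (a b c d t : K) (x y : Fin 7 → K) :
    g7b K a b c d (t • x) y = t • g7b K a b c d x y := by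
  funext i
  fin_cases i <;> simp [g7b, F7.cv5, F7.cv6] <;> ring

theorem F7.g7b_add_right (a b c d : K) (x y y' : Fin 7 → K) :
    g7b K a b c d x (y + y') = g7b K a b c d x y + g7b K a b c d x y' := by
  funext i
  fin_cases i <;> simp [g7b, F7.cv5, F7.cv6] <;> ring

theorem F7.g7b_smul_right (a b c d t : K) (x y : Fin 7 → K) :
    g7b K a b c d x (t • y) = t • g7b K a b c d x y := by
  funext i
  fin_cases i <;> simp [g7b, F7.cv5, F7.cv6] <;> ring

noncomputable def F7.brkMap {L : Type*} [LieRing L] [LieAlgebra K L]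
    (B : Basis (Fin 7) K L) : L →ₗ[K] L →ₗ[K] (Fin 7 → K) :=
  LinearMap.mk₂ K (fun u v : L => B.equivFun ⁅u, v⁆)
    (fun m1 m2 n => by simp only [add_lie, map_add])
    (fun c m n => by simp only [smul_lie, map_smul])
    (fun m n1 n2 => by simp only [lie_add, map_add])
    (fun c m n => by simp only [lie_smul, map_smul])

noncomputable def F7.g7bMap {L : Type*} [LieRing L] [LieAlgebra K L] (aa bb cc dd : K)
    (B : Basis (Fin 7) K L) : L →ₗ[K] L →ₗ[K] (Fin 7 → K) :=
  LinearMap.mk₂ K (fun u v : L => g7b K aa bb cc dd (B.equivFun u) (B.equivFun v))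
    (fun m1 m2 n => by simp only [map_add, F7.g7b_add_left])
    (fun c m n => by simp only [map_smul, F7.g7b_smul_left])
    (fun m n1 n2 => by simp only [map_add, F7.g7b_add_right])
    (fun c m n => by simp only [map_smul, F7.g7b_smul_right])

theorem F7.brkMap_apply {L : Type*} [LieRing L] [LieAlgebra K L] (B : Basis (Fin 7) K L)
    (u v : L) : F7.brkMap B u v = B.equivFun ⁅u, v⁆ := rfl

theorem F7.g7bMap_apply {L : Type*} [LieRing L] [LieAlgebra K L] (aa bb cc dd : K)
    (B : Basis (Fin 7) K L) (u v : L) :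
    F7.g7bMap aa bb cc dd B u v = g7b K aa bb cc dd (B.equivFun u) (B.equivFun v) := rfl

set_option maxHeartbeats 2000000 in
theorem F7.final {L : Type*} [LieRing L] [LieAlgebra K L]
    (aa bb cc dd : K) (e1 E2 E3 E4 E5 E6 y7 : L) (B : Basis (Fin 7) K L)
    (hB0 : B 0 = e1) (hB1 : B 1 = E2) (hB2 : B 2 = E3) (hB3 : B 3 = E4)
    (hB4 : B 4 = E5) (hB5 : B 5 = E6) (hB6 : B 6 = y7)
    (T01 : ⁅e1, E2⁆ = 0) (T02 : ⁅e1, E3⁆ = E2) (T03 : ⁅e1, E4⁆ = E3)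
    (T04 : ⁅e1, E5⁆ = E4) (T05 : ⁅e1, E6⁆ = E5) (T06 : ⁅e1, y7⁆ = E6)
    (T12 : ⁅E2, E3⁆ = 0) (T13 : ⁅E2, E4⁆ = 0) (T14 : ⁅E2, E5⁆ = 0)
    (T15 : ⁅E2, E6⁆ = 0) (T16 : ⁅E2, y7⁆ = 0)
    (T23 : ⁅E3, E4⁆ = 0) (T24 : ⁅E3, E5⁆ = 0) (T25 : ⁅E3, E6⁆ = 0) (T26 : ⁅E3, y7⁆ = 0)
    (T34 : ⁅E4, E5⁆ = 0) (T35 : ⁅E4, E6⁆ = 0) (T36 : ⁅E4, y7⁆ = aa • E2)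
    (T45 : ⁅E5, E6⁆ = bb • E2) (T46 : ⁅E5, y7⁆ = cc • E2 + (aa + bb) • E3)
    (T56 : ⁅E6, y7⁆ = dd • E2 + cc • E3 + (aa + bb) • E4) :
    ∀ u v : L, B.equivFun ⁅u, v⁆ = g7b K aa bb cc dd (B.equivFun u) (B.equivFun v) := by
  classical
  have S10 : ⁅E2, e1⁆ = 0 := by rw [← lie_skew, T01, neg_zero]
  have S20 : ⁅E3, e1⁆ = -E2 := by rw [← lie_skew, T02]
  have S30 : ⁅E4, e1⁆ = -E3 := by rw [← lie_skew, T03]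
  have S40 : ⁅E5, e1⁆ = -E4 := by rw [← lie_skew, T04]
  have S50 : ⁅E6, e1⁆ = -E5 := by rw [← lie_skew, T05]
  have S60 : ⁅y7, e1⁆ = -E6 := by rw [← lie_skew, T06]
  have S21 : ⁅E3, E2⁆ = 0 := by rw [← lie_skew, T12, neg_zero]
  have S31 : ⁅E4, E2⁆ = 0 := by rw [← lie_skew, T13, neg_zero]
  have S41 : ⁅E5, E2⁆ = 0 := by rw [← lie_skew, T14, neg_zero]
  have S51 : ⁅E6, E2⁆ = 0 := by rw [← lie_skew, T15, neg_zero]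
  have S61 : ⁅y7, E2⁆ = 0 := by rw [← lie_skew, T16, neg_zero]
  have S32 : ⁅E4, E3⁆ = 0 := by rw [← lie_skew, T23, neg_zero]
  have S42 : ⁅E5, E3⁆ = 0 := by rw [← lie_skew, T24, neg_zero]
  have S52 : ⁅E6, E3⁆ = 0 := by rw [← lie_skew, T25, neg_zero]
  have S62 : ⁅y7, E3⁆ = 0 := by rw [← lie_skew, T26, neg_zero]
  have S43 : ⁅E5, E4⁆ = 0 := by rw [← lie_skew, T34, neg_zero]
  have S53 : ⁅E6, E4⁆ = 0 := by rw [← lie_skew, T35, neg_zero]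
  have S63 : ⁅y7, E4⁆ = -(aa • E2) := by rw [← lie_skew, T36]
  have S54 : ⁅E6, E5⁆ = -(bb • E2) := by rw [← lie_skew, T45]
  have S64 : ⁅y7, E5⁆ = -(cc • E2 + (aa + bb) • E3) := by rw [← lie_skew, T46]
  have S65 : ⁅y7, E6⁆ = -(dd • E2 + cc • E3 + (aa + bb) • E4) := by rw [← lie_skew, T56]
  have hf0 : B.equivFun e1 = fun j => if 0 = j then (1 : K) else 0 := by
    rw [← hB0]; exact funext fun j => B.equivFun_self 0 j
  have hf1 : B.equivFun E2 = fun j => if 1 = j then (1 : K) else 0 := by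
    rw [← hB1]; exact funext fun j => B.equivFun_self 1 j
  have hf2 : B.equivFun E3 = fun j => if 2 = j then (1 : K) else 0 := by
    rw [← hB2]; exact funext fun j => B.equivFun_self 2 j
  have hf3 : B.equivFun E4 = fun j => if 3 = j then (1 : K) else 0 := by
    rw [← hB3]; exact funext fun j => B.equivFun_self 3 j
  have hf4 : B.equivFun E5 = fun j => if 4 = j then (1 : K) else 0 := by
    rw [← hB4]; exact funext fun j => B.equivFun_self 4 j
  have hf5 : B.equivFun E6 = fun j => if 5 = j then (1 : K) else 0 := by
    rw [← hB5]; exact funext fun j => B.equivFun_self 5 j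
  have hf6 : B.equivFun y7 = fun j => if 6 = j then (1 : K) else 0 := by
    rw [← hB6]; exact funext fun j => B.equivFun_self 6 j
  have key : F7.brkMap (K := K) B = F7.g7bMap aa bb cc dd B := by
    apply LinearMap.ext_basis B B
    intro i j
    rw [F7.brkMap_apply, F7.g7bMap_apply]
    fin_cases i <;> fin_cases j <;>
      simp [hB0, hB1, hB2, hB3, hB4, hB5, hB6, lie_self,
        T01, T02, T03, T04, T05, T06, T12, T13, T14, T15, T16, T23, T24, T25, T26,
        T34, T35, T36, T45, T46, T56, S10, S20, S30, S40, S50, S60, S21, S31, S41,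
        S51, S61, S32, S42, S52, S62, S43, S53, S63, S54, S64, S65,
        map_add, map_smul, map_neg, map_zero, hf0, hf1, hf2, hf3, hf4, hf5, hf6] <;>
      (funext k; fin_cases k <;> simp [g7b, F7.cv5, F7.cv6])
  intro u v
  have := LinearMap.congr_fun₂ key u v
  rwa [F7.brkMap_apply, F7.g7bMap_apply] at this

end AuxG7b


theorem F7.pigeon {P1 P2 P3 P4 Q1 Q2 Q3 Q4 R1 R2 R3 R4 : Prop}
    (hP12 : ¬(P1 ∧ P2)) (hP13 : ¬(P1 ∧ P3)) (hP14 : ¬(P1 ∧ P4))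
    (hP23 : ¬(P2 ∧ P3)) (hP24 : ¬(P2 ∧ P4)) (hP34 : ¬(P3 ∧ P4))
    (hQ12 : ¬(Q1 ∧ Q2)) (hQ13 : ¬(Q1 ∧ Q3)) (hQ14 : ¬(Q1 ∧ Q4))
    (hQ23 : ¬(Q2 ∧ Q3)) (hQ24 : ¬(Q2 ∧ Q4)) (hQ34 : ¬(Q3 ∧ Q4))
    (hR12 : ¬(R1 ∧ R2)) (hR13 : ¬(R1 ∧ R3)) (hR14 : ¬(R1 ∧ R4))
    (hR23 : ¬(R2 ∧ R3)) (hR24 : ¬(R2 ∧ R4)) (hR34 : ¬(R3 ∧ R4))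
    (d1 : P1 ∨ Q1 ∨ R1) (d2 : P2 ∨ Q2 ∨ R2) (d3 : P3 ∨ Q3 ∨ R3)
    (d4 : P4 ∨ Q4 ∨ R4) : False := by
  rcases d1 with h1 | h1 | h1 <;> rcases d2 with h2 | h2 | h2 <;>
    rcases d3 with h3 | h3 | h3 <;> rcases d4 with h4 | h4 | h4 <;>
    first
      | exact hP12 ⟨h1, h2⟩ | exact hP13 ⟨h1, h3⟩ | exact hP14 ⟨h1, h4⟩
      | exact hP23 ⟨h2, h3⟩ | exact hP24 ⟨h2, h4⟩ | exact hP34 ⟨h3, h4⟩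
      | exact hQ12 ⟨h1, h2⟩ | exact hQ13 ⟨h1, h3⟩ | exact hQ14 ⟨h1, h4⟩
      | exact hQ23 ⟨h2, h3⟩ | exact hQ24 ⟨h2, h4⟩ | exact hQ34 ⟨h3, h4⟩
      | exact hR12 ⟨h1, h2⟩ | exact hR13 ⟨h1, h3⟩ | exact hR14 ⟨h1, h4⟩
      | exact hR23 ⟨h2, h3⟩ | exact hR24 ⟨h2, h4⟩ | exact hR34 ⟨h3, h4⟩

section AuxLie

variable {K} {L : Type*} [LieRing L] [LieAlgebra K L]

local notation "𝓒" => LieModule.lowerCentralSeries K L L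

/-- The coerced submodule of the lower central series. -/
abbrev F7.lcsS (K : Type*) [Field K] (L : Type*) [LieRing L] [LieAlgebra K L] (k : ℕ) :
    Submodule K L :=
  ((LieModule.lowerCentralSeries K L L k : LieSubmodule K L L) : Submodule K L)

theorem F7.mem_top (x : L) : x ∈ 𝓒 0 := by
  rw [LieModule.lowerCentralSeries_zero]; trivial

theorem F7.lie_mem_succ {k : ℕ} (x : L) {y : L} (hy : y ∈ 𝓒 k) :
    ⁅x, y⁆ ∈ 𝓒 (k + 1) := by
  rw [LieModule.lowerCentralSeries_succ]
  exact LieSubmodule.lie_mem_lie (LieSubmodule.mem_top x) hy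

theorem F7.lie_mem_add {j : ℕ} : ∀ {i : ℕ} {x y : L}, x ∈ 𝓒 i → y ∈ 𝓒 j →
    ⁅x, y⁆ ∈ 𝓒 (i + j + 1) := by
  induction j with
  | zero =>
    intro i x y hx _
    have h' := ((𝓒 (i+1)).neg_mem (F7.lie_mem_succ y hx))
    rw [← lie_skew] at h'
    simpa using h'
  | succ j ih =>
    intro i x y hx hy
    rw [LieModule.lowerCentralSeries_succ] at hy
    rw [← LieSubmodule.mem_toSubmodule, LieSubmodule.lieIdeal_oper_eq_linear_span'] at hy
    have key : ∀ z ∈ Submodule.span K {m : L | ∃ u ∈ (⊤ : LieIdeal K L), ∃ n ∈ (𝓒 j), ⁅u, n⁆ = m},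
        ⁅x, z⁆ ∈ (𝓒 (i + (j+1) + 1)) := by
      intro z hz
      refine Submodule.span_induction ?_ ?_ ?_ ?_ hz
      · rintro m ⟨u, -, n, hn, rfl⟩
        rw [leibniz_lie]
        refine ((𝓒 (i + (j+1) + 1))).add_mem ?_ ?_
        · have hxu : ⁅x, u⁆ ∈ 𝓒 (i+1) := by
            have h' := ((𝓒 (i+1)).neg_mem (F7.lie_mem_succ u hx))
            rw [← lie_skew] at h'
            simpa using h'
          have := ih hxu hn
          have hE : (i + 1) + j + 1 = i + (j + 1) + 1 := by omega
          rwa [hE] at this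
        · have hxn : ⁅x, n⁆ ∈ 𝓒 (i + j + 1) := ih hx hn
          have := F7.lie_mem_succ u hxn
          have hE : i + j + 1 + 1 = i + (j + 1) + 1 := by omega
          rwa [hE] at this
      · simp
      · intro m n _ _ hm hn
        rw [lie_add]; exact ((𝓒 (i + (j+1) + 1))).add_mem hm hn
      · intro t m _ hm
        rw [lie_smul]; exact ((𝓒 (i + (j+1) + 1))).smul_mem t hm
    exact key y hy

variable [FiniteDimensional K L]

theorem F7.decomp {k : ℕ} {v : L} (hv : v ∈ 𝓒 k) (hv' : v ∉ 𝓒 (k+1))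
    (hrk : finrank K (F7.lcsS K L k) = finrank K (F7.lcsS K L (k+1)) + 1) :
    ∀ m ∈ 𝓒 k, ∃ (μ : K) (z : L), z ∈ 𝓒 (k+1) ∧ m = μ • v + z := by
  intro m hm
  have hle : F7.lcsS K L (k+1) ≤ F7.lcsS K L k :=
    (LieSubmodule.toSubmodule_le_toSubmodule _ _).mpr
      (LieModule.antitone_lowerCentralSeries K L L (Nat.le_succ k))
  obtain ⟨μ, z, hz, hzz⟩ := F7.decomp_step hle ((LieSubmodule.mem_toSubmodule _).mpr hv)
    (fun h => hv' ((LieSubmodule.mem_toSubmodule _).mp h)) hrk m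
    ((LieSubmodule.mem_toSubmodule _).mpr hm)
  exact ⟨μ, z, (LieSubmodule.mem_toSubmodule _).mp hz, hzz⟩

theorem F7.proper {k : ℕ} {v : L} (hv : v ∈ 𝓒 k) (hv' : v ∉ 𝓒 (k+1))
    (hrk : finrank K (F7.lcsS K L k) = finrank K (F7.lcsS K L (k+1)) + 1)
    (hlt : finrank K (F7.lcsS K L (k+2)) < finrank K (F7.lcsS K L (k+1))) :
    ∃ u : L, ⁅u, v⁆ ∉ 𝓒 (k+2) := by
  by_contra hcon
  push_neg at hcon
  have hle : 𝓒 (k+1) ≤ 𝓒 (k+2) := by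
    have h1 : 𝓒 (k+1) = ⁅(⊤ : LieIdeal K L), 𝓒 k⁆ :=
      LieModule.lowerCentralSeries_succ K L L k
    rw [h1, LieSubmodule.lie_le_iff]
    intro x _ m hm
    obtain ⟨μ, z, hz, rfl⟩ := F7.decomp hv hv' hrk m hm
    rw [lie_add, lie_smul]
    exact add_mem (SMulMemClass.smul_mem μ (hcon x)) (F7.lie_mem_succ x hz)
  have hfr : finrank K (F7.lcsS K L (k+1)) ≤ finrank K (F7.lcsS K L (k+2)) :=
    Submodule.finrank_mono ((LieSubmodule.toSubmodule_le_toSubmodule _ _).mpr hle)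
  omega

theorem F7.transfer_mem {k : ℕ} {v E u : L} (hv : v ∈ 𝓒 k) (hv' : v ∉ 𝓒 (k+1))
    (hrk : finrank K (F7.lcsS K L k) = finrank K (F7.lcsS K L (k+1)) + 1)
    (hE : E ∈ 𝓒 k) (hS : ⁅u, v⁆ ∈ 𝓒 (k+2)) : ⁅u, E⁆ ∈ 𝓒 (k+2) := by
  obtain ⟨μ, z, hz, rfl⟩ := F7.decomp hv hv' hrk E hE
  rw [lie_add, lie_smul]
  exact add_mem (SMulMemClass.smul_mem μ hS) (F7.lie_mem_succ u hz)

theorem F7.transfer_not {k : ℕ} {v E u : L} (hv : v ∈ 𝓒 k)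
    (hE : E ∈ 𝓒 k) (hE' : E ∉ 𝓒 (k+1))
    (hrk : finrank K (F7.lcsS K L k) = finrank K (F7.lcsS K L (k+1)) + 1)
    (hS : ⁅u, v⁆ ∉ 𝓒 (k+2)) : ⁅u, E⁆ ∉ 𝓒 (k+2) :=
  fun hcon => hS (F7.transfer_mem hE hE' hrk hv hcon)

theorem F7.rank_sup_le (h5 : finrank K (F7.lcsS K L 1) = 5) (u : L) :
    finrank K ((Submodule.span K ({u} : Set L) ⊔ F7.lcsS K L 1 : Submodule K L)) ≤ 6 := by
  have h := Submodule.finrank_add_le_finrank_add_finrank (Submodule.span K ({u} : Set L))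
    (F7.lcsS K L 1)
  have hs : finrank K (Submodule.span K ({u} : Set L)) ≤ 1 := by
    by_cases hu : u = 0
    · subst hu
      rw [Submodule.span_zero_singleton]
      simp
    · rw [finrank_span_singleton hu]
  omega

theorem F7.top_decomp (hdim : finrank K L = 7)
    (h5 : finrank K (F7.lcsS K L 1) = 5) {u w : L} (hu : u ∉ 𝓒 1)
    (hw : w ∉ Submodule.span K ({u} : Set L) ⊔ F7.lcsS K L 1) :
    ∀ z : L, ∃ (α β : K) (c : L), c ∈ 𝓒 1 ∧ z = α • u + β • w + c := by
  have hwC2 : w ∉ F7.lcsS K L 1 := fun h => hw (Submodule.mem_sup_right h)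
  have hw0 : w ≠ 0 := fun h => hwC2 (h ▸ (F7.lcsS K L 1).zero_mem)
  have hT1le : finrank K ((Submodule.span K ({w} : Set L) ⊔ F7.lcsS K L 1 : Submodule K L)) ≤ 6 := F7.rank_sup_le h5 w
  have hT1lt : 5 < finrank K ((Submodule.span K ({w} : Set L) ⊔ F7.lcsS K L 1 : Submodule K L)) := by
    have hlt : F7.lcsS K L 1 < Submodule.span K ({w} : Set L) ⊔ F7.lcsS K L 1 := by
      refine lt_of_le_of_ne le_sup_right (fun hEq => hwC2 ?_)
      rw [hEq]
      exact Submodule.mem_sup_left (Submodule.mem_span_singleton_self w)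
    have := Submodule.finrank_lt_finrank_of_lt hlt
    rw [h5] at this
    exact this
  have hT1 : finrank K ((Submodule.span K ({w} : Set L) ⊔ F7.lcsS K L 1 : Submodule K L)) = 6 := by omega
  have huT1 : u ∉ Submodule.span K ({w} : Set L) ⊔ F7.lcsS K L 1 := by
    intro h
    obtain ⟨p, hp, q, hq, hpq⟩ := Submodule.mem_sup.mp h
    obtain ⟨β, rfl⟩ := Submodule.mem_span_singleton.mp hp
    by_cases hβ : β = 0
    · apply hu
      have huq : u = q := by rw [← hpq, hβ, zero_smul, zero_add]
      rw [huq]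
      exact (LieSubmodule.mem_toSubmodule _).mp hq
    · apply hw
      have hβw : β • w = u - q := by
        rw [← hpq]; abel
      have hwEq : w = β⁻¹ • (u - q) := by
        rw [← hβw, inv_smul_smul₀ hβ]
      rw [hwEq]
      exact Submodule.smul_mem _ _ (Submodule.sub_mem _
        (Submodule.mem_sup_left (Submodule.mem_span_singleton_self u))
        (Submodule.mem_sup_right hq))
  intro z
  obtain ⟨α, c1, hc1, hz1⟩ := F7.decomp_step le_top Submodule.mem_top huT1
    (by rw [finrank_top, hdim, hT1]) z Submodule.mem_top
  obtain ⟨β, c, hc, hc1eq⟩ := F7.decomp_step le_sup_right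
    (Submodule.mem_sup_left (Submodule.mem_span_singleton_self w)) hwC2
    (by rw [hT1, h5]) c1 hc1
  refine ⟨α, β, c, (LieSubmodule.mem_toSubmodule _).mp hc, ?_⟩
  rw [hz1, hc1eq, ← add_assoc]

theorem F7.span_pair (hdim : finrank K L = 7)
    (h5 : finrank K (F7.lcsS K L 1) = 5) {u w : L} (hu : u ∉ 𝓒 1)
    (hw : w ∉ Submodule.span K ({u} : Set L) ⊔ F7.lcsS K L 1) :
    Submodule.span K {u} ⊔ (Submodule.span K ({w} : Set L) ⊔ F7.lcsS K L 1) = ⊤ := by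
  rw [eq_top_iff]
  rintro z -
  obtain ⟨α, β, c, hc, rfl⟩ := F7.top_decomp hdim h5 hu hw z
  refine Submodule.add_mem _ (Submodule.add_mem _ ?_ ?_) ?_
  · exact Submodule.smul_mem _ _ (Submodule.mem_sup_left (Submodule.mem_span_singleton_self u))
  · exact Submodule.smul_mem _ _ (Submodule.mem_sup_right
      (Submodule.mem_sup_left (Submodule.mem_span_singleton_self w)))
  · exact Submodule.mem_sup_right (Submodule.mem_sup_right
      ((LieSubmodule.mem_toSubmodule _).mpr hc))

theorem F7.bracket_notin (hdim : finrank K L = 7)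
    (h5 : finrank K (F7.lcsS K L 1) = 5) (h4 : finrank K (F7.lcsS K L 2) = 4)
    {u w : L} (hu : u ∉ 𝓒 1) (hw : w ∉ Submodule.span K ({u} : Set L) ⊔ F7.lcsS K L 1) :
    ⁅u, w⁆ ∉ 𝓒 2 := by
  intro hcon
  have hle : 𝓒 1 ≤ 𝓒 2 := by
    have h1 : 𝓒 1 = ⁅(⊤ : LieIdeal K L), 𝓒 0⁆ :=
      LieModule.lowerCentralSeries_succ K L L 0
    rw [h1, LieSubmodule.lie_le_iff]
    intro x _ m _
    obtain ⟨α, β, cx, hcx, rfl⟩ := F7.top_decomp hdim h5 hu hw x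
    obtain ⟨α', β', cm, hcm, hmEq⟩ := F7.top_decomp hdim h5 hu hw m
    have hum : ⁅u, m⁆ ∈ 𝓒 2 := by
      rw [hmEq, lie_add, lie_add, lie_smul, lie_smul, lie_self]
      refine add_mem (add_mem ?_ ?_) ?_
      · rw [smul_zero]; exact zero_mem _
      · exact SMulMemClass.smul_mem β' hcon
      · exact F7.lie_mem_succ u hcm
    have hwm : ⁅w, m⁆ ∈ 𝓒 2 := by
      rw [hmEq, lie_add, lie_add, lie_smul, lie_smul, lie_self]
      refine add_mem (add_mem ?_ ?_) ?_
      · have h' : ⁅w, u⁆ = -⁅u, w⁆ := by rw [lie_skew]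
        rw [h']
        exact SMulMemClass.smul_mem α' (neg_mem hcon)
      · rw [smul_zero]; exact zero_mem _
      · exact F7.lie_mem_succ w hcm
    rw [add_lie, add_lie, smul_lie, smul_lie]
    refine add_mem (add_mem (SMulMemClass.smul_mem α hum) (SMulMemClass.smul_mem β hwm)) ?_
    exact F7.lie_mem_add hcx (F7.mem_top m)
  have hfr : finrank K (F7.lcsS K L 1) ≤ finrank K (F7.lcsS K L 2) :=
    Submodule.finrank_mono ((LieSubmodule.toSubmodule_le_toSubmodule _ _).mpr hle)
  omega

theorem F7.S2_le_S3 (hdim : finrank K L = 7)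
    (h5 : finrank K (F7.lcsS K L 1) = 5) (h4 : finrank K (F7.lcsS K L 2) = 4)
    (h3 : finrank K (F7.lcsS K L 3) = 3)
    {w6 w5 : L} (hw6 : w6 ∈ 𝓒 1) (hw6' : w6 ∉ 𝓒 2) (hw5 : w5 ∈ 𝓒 2) (hw5' : w5 ∉ 𝓒 3)
    {u : L} (hu : ⁅u, w6⁆ ∈ 𝓒 3) : ⁅u, w5⁆ ∈ 𝓒 4 := by
  have hr1 : finrank K (F7.lcsS K L 1) = finrank K (F7.lcsS K L 2) + 1 := by omega
  have hr2 : finrank K (F7.lcsS K L 2) = finrank K (F7.lcsS K L 3) + 1 := by omega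
  by_cases huC2 : u ∈ 𝓒 1
  · exact F7.lie_mem_add huC2 hw5
  · obtain ⟨w, hwS2⟩ := F7.proper hw6 hw6' hr1
      (by rw [show (1+2 : ℕ) = 3 from rfl, show (1+1 : ℕ) = 2 from rfl]; omega)
    have hwnot : w ∉ Submodule.span K ({u} : Set L) ⊔ F7.lcsS K L 1 := by
      intro h
      apply hwS2
      obtain ⟨p, hp, q, hq, hpq⟩ := Submodule.mem_sup.mp h
      obtain ⟨β, rfl⟩ := Submodule.mem_span_singleton.mp hp
      rw [← hpq, add_lie, smul_lie]
      exact add_mem (SMulMemClass.smul_mem β hu)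
        (F7.lie_mem_add ((LieSubmodule.mem_toSubmodule _).mp hq) hw6)
    have hfC2 : ⁅u, w⁆ ∈ 𝓒 1 := F7.lie_mem_succ u (F7.mem_top w)
    have hfC3 : ⁅u, w⁆ ∉ 𝓒 2 := F7.bracket_notin hdim h5 h4 huC2 hwnot
    have hufC3 : ⁅u, ⁅u, w⁆⁆ ∈ 𝓒 3 := F7.transfer_mem hw6 hw6' hr1 hfC2 hu
    have hwfC3 : ⁅w, ⁅u, w⁆⁆ ∈ 𝓒 2 := F7.lie_mem_add (F7.mem_top w) hfC2
    have hwf' : ⁅w, ⁅u, w⁆⁆ ∉ 𝓒 3 := by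
      intro hcon
      have hle : 𝓒 2 ≤ 𝓒 3 := by
        have h1 : 𝓒 2 = ⁅(⊤ : LieIdeal K L), 𝓒 1⁆ :=
          LieModule.lowerCentralSeries_succ K L L 1
        rw [h1, LieSubmodule.lie_le_iff]
        intro x _ m hm
        obtain ⟨μ, z, hz, rfl⟩ := F7.decomp hfC2 hfC3 hr1 m hm
        rw [lie_add, lie_smul]
        refine add_mem (SMulMemClass.smul_mem μ ?_) (F7.lie_mem_succ x hz)
        obtain ⟨α, β, cx, hcx, rfl⟩ := F7.top_decomp hdim h5 huC2 hwnot x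
        rw [add_lie, add_lie, smul_lie, smul_lie]
        exact add_mem (add_mem (SMulMemClass.smul_mem α hufC3) (SMulMemClass.smul_mem β hcon))
          (F7.lie_mem_add hcx hfC2)
      have hfr : finrank K (F7.lcsS K L 2) ≤ finrank K (F7.lcsS K L 3) :=
        Submodule.finrank_mono ((LieSubmodule.toSubmodule_le_toSubmodule _ _).mpr hle)
      omega
    have hmain : ⁅u, ⁅w, ⁅u, w⁆⁆⁆ ∈ 𝓒 4 := by
      rw [leibniz_lie, lie_self, zero_add]
      exact F7.lie_mem_succ w hufC3
    exact F7.transfer_mem hwfC3 hwf' hr2 hw5 hmain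

end AuxLie

set_option maxHeartbeats 2000000 in
/-- Every seven-dimensional filiform Lie algebra over a field of characteristic different
from 2 is isomorphic to `g^7_{abcd}` for some `a, b, c, d ∈ K`. -/
theorem stmt12 (hchar : ringChar K ≠ 2) (L : Type*) [LieRing L] [LieAlgebra K L]
    (hfil : IsFiliform K L 7) :
    ∃ a b c d : K, g7IsoTo K L a b c d := by
  classical
  obtain ⟨hdim, hlcs⟩ := hfil
  have hFD : FiniteDimensional K L := FiniteDimensional.of_finrank_pos (by omega)
  have h2K : (2 : K) ≠ 0 := by
    intro h2
    have hdvd : ringChar K ∣ 2 := (CharP.cast_eq_zero_iff K (ringChar K) 2).mp h2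
    rcases (Nat.prime_two.eq_one_or_self_of_dvd _ hdvd) with h1 | h1
    · have hone : ((1:ℕ) : K) = 0 := by
        rw [← h1]; exact CharP.cast_eq_zero K (ringChar K)
      simp at hone
    · exact hchar h1
  have h5 : finrank K (F7.lcsS K L 1) = 5 := hlcs 2 (by norm_num) (by norm_num)
  have h4 : finrank K (F7.lcsS K L 2) = 4 := hlcs 3 (by norm_num) (by norm_num)
  have h3 : finrank K (F7.lcsS K L 3) = 3 := hlcs 4 (by norm_num) (by norm_num)
  have h2 : finrank K (F7.lcsS K L 4) = 2 := hlcs 5 (by norm_num) (by norm_num)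
  have h1 : finrank K (F7.lcsS K L 5) = 1 := hlcs 6 (by norm_num) (by norm_num)
  have h0 : finrank K (F7.lcsS K L 6) = 0 := hlcs 7 (by norm_num) (by norm_num)
  have hr1 : finrank K (F7.lcsS K L 1) = finrank K (F7.lcsS K L 2) + 1 := by omega
  have hr2 : finrank K (F7.lcsS K L 2) = finrank K (F7.lcsS K L 3) + 1 := by omega
  have hr3 : finrank K (F7.lcsS K L 3) = finrank K (F7.lcsS K L 4) + 1 := by omega
  have hr4 : finrank K (F7.lcsS K L 4) = finrank K (F7.lcsS K L 5) + 1 := by omega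
  have hr5 : finrank K (F7.lcsS K L 5) = finrank K (F7.lcsS K L 6) + 1 := by omega
  -- the sixth term vanishes
  have hbot : ∀ x ∈ LieModule.lowerCentralSeries K L L 6, x = (0 : L) := by
    intro x hx
    have hB : (F7.lcsS K L 6) = ⊥ := Submodule.finrank_eq_zero.mp h0
    have hx' : x ∈ F7.lcsS K L 6 := (LieSubmodule.mem_toSubmodule _).mpr hx
    rw [hB] at hx'
    simpa using hx'
  have hmono : ∀ {i j : ℕ}, i ≤ j → ∀ {x : L},
      x ∈ LieModule.lowerCentralSeries K L L j → x ∈ LieModule.lowerCentralSeries K L L i := by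
    intro i j hij x hx
    exact LieModule.antitone_lowerCentralSeries K L L hij hx
  have hzero : ∀ {x y : L} {i j : ℕ}, x ∈ LieModule.lowerCentralSeries K L L i →
      y ∈ LieModule.lowerCentralSeries K L L j → 6 ≤ i + j + 1 → ⁅x, y⁆ = 0 := by
    intro x y i j hx hy h6
    exact hbot _ (hmono h6 (F7.lie_mem_add hx hy))
  -- flag generators
  obtain ⟨w6, hw6s, hw6s'⟩ := F7.exists_mem_notMem (W := F7.lcsS K L 1) (W' := F7.lcsS K L 2)
    (by omega)
  obtain ⟨w5, hw5s, hw5s'⟩ := F7.exists_mem_notMem (W := F7.lcsS K L 2) (W' := F7.lcsS K L 3)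
    (by omega)
  obtain ⟨w4, hw4s, hw4s'⟩ := F7.exists_mem_notMem (W := F7.lcsS K L 3) (W' := F7.lcsS K L 4)
    (by omega)
  obtain ⟨w3, hw3s, hw3s'⟩ := F7.exists_mem_notMem (W := F7.lcsS K L 4) (W' := F7.lcsS K L 5)
    (by omega)
  have hw6 : w6 ∈ LieModule.lowerCentralSeries K L L 1 := (LieSubmodule.mem_toSubmodule _).mp hw6s
  have hw6' : w6 ∉ LieModule.lowerCentralSeries K L L 2 :=
    fun h => hw6s' ((LieSubmodule.mem_toSubmodule _).mpr h)
  have hw5 : w5 ∈ LieModule.lowerCentralSeries K L L 2 := (LieSubmodule.mem_toSubmodule _).mp hw5s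
  have hw5' : w5 ∉ LieModule.lowerCentralSeries K L L 3 :=
    fun h => hw5s' ((LieSubmodule.mem_toSubmodule _).mpr h)
  have hw4 : w4 ∈ LieModule.lowerCentralSeries K L L 3 := (LieSubmodule.mem_toSubmodule _).mp hw4s
  have hw4' : w4 ∉ LieModule.lowerCentralSeries K L L 4 :=
    fun h => hw4s' ((LieSubmodule.mem_toSubmodule _).mpr h)
  have hw3 : w3 ∈ LieModule.lowerCentralSeries K L L 4 := (LieSubmodule.mem_toSubmodule _).mp hw3s
  have hw3' : w3 ∉ LieModule.lowerCentralSeries K L L 5 :=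
    fun h => hw3s' ((LieSubmodule.mem_toSubmodule _).mpr h)
  -- the three "bad direction" submodules
  let rb : L → L →ₗ[K] L := fun v =>
    { toFun := fun u => ⁅u, v⁆
      map_add' := fun a b => add_lie a b v
      map_smul' := fun t a => smul_lie t a v }
  let S3 : Submodule K L := (F7.lcsS K L 4).comap (rb w5)
  let S4 : Submodule K L := (F7.lcsS K L 5).comap (rb w4)
  let S5 : Submodule K L := (F7.lcsS K L 6).comap (rb w3)
  have hS3mem : ∀ {u : L}, u ∈ S3 ↔ ⁅u, w5⁆ ∈ LieModule.lowerCentralSeries K L L 4 := by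
    intro u
    exact ⟨fun h => (LieSubmodule.mem_toSubmodule _).mp h,
      fun h => (LieSubmodule.mem_toSubmodule _).mpr h⟩
  have hS4mem : ∀ {u : L}, u ∈ S4 ↔ ⁅u, w4⁆ ∈ LieModule.lowerCentralSeries K L L 5 := by
    intro u
    exact ⟨fun h => (LieSubmodule.mem_toSubmodule _).mp h,
      fun h => (LieSubmodule.mem_toSubmodule _).mpr h⟩
  have hS5mem : ∀ {u : L}, u ∈ S5 ↔ ⁅u, w3⁆ ∈ LieModule.lowerCentralSeries K L L 6 := by
    intro u
    exact ⟨fun h => (LieSubmodule.mem_toSubmodule _).mp h,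
      fun h => (LieSubmodule.mem_toSubmodule _).mpr h⟩
  have hC2S3 : ∀ c ∈ LieModule.lowerCentralSeries K L L 1, c ∈ S3 :=
    fun c hc => hS3mem.mpr (F7.lie_mem_add hc hw5)
  have hC2S4 : ∀ c ∈ LieModule.lowerCentralSeries K L L 1, c ∈ S4 :=
    fun c hc => hS4mem.mpr (F7.lie_mem_add hc hw4)
  have hC2S5 : ∀ c ∈ LieModule.lowerCentralSeries K L L 1, c ∈ S5 :=
    fun c hc => hS5mem.mpr (F7.lie_mem_add hc hw3)
  have hS3ex : ∃ z, z ∉ S3 := by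
    obtain ⟨z, hz⟩ := F7.proper hw5 hw5' hr2
      (by rw [show (2+2 : ℕ) = 4 from rfl, show (2+1 : ℕ) = 3 from rfl]; omega)
    exact ⟨z, fun h => hz (hS3mem.mp h)⟩
  have hS4ex : ∃ z, z ∉ S4 := by
    obtain ⟨z, hz⟩ := F7.proper hw4 hw4' hr3
      (by rw [show (3+2 : ℕ) = 5 from rfl, show (3+1 : ℕ) = 4 from rfl]; omega)
    exact ⟨z, fun h => hz (hS4mem.mp h)⟩
  have hS5ex : ∃ z, z ∉ S5 := by
    obtain ⟨z, hz⟩ := F7.proper hw3 hw3' hr4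
      (by rw [show (4+2 : ℕ) = 6 from rfl, show (4+1 : ℕ) = 5 from rfl]; omega)
    exact ⟨z, fun h => hz (hS5mem.mp h)⟩
  -- pick two independent directions
  obtain ⟨u0, hu0S3⟩ := hS3ex
  have hu0C2 : u0 ∉ LieModule.lowerCentralSeries K L L 1 := fun h => hu0S3 (hC2S3 u0 h)
  obtain ⟨v0, hv0T, hv0⟩ := F7.exists_mem_notMem (W := (⊤ : Submodule K L))
    (W' := Submodule.span K ({u0} : Set L) ⊔ F7.lcsS K L 1)
    (by have := F7.rank_sup_le (L := L) h5 u0; rw [finrank_top, hdim]; omega)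
  clear hv0T
  have hspan_pair := F7.span_pair hdim h5 hu0C2 hv0
  -- each bad submodule contains at most one of the four candidates
  have hWpair : ∀ (W : Submodule K L), (∀ c ∈ LieModule.lowerCentralSeries K L L 1, c ∈ W) →
      (∃ z, z ∉ W) → u0 ∈ W → v0 ∈ W → False := by
    intro W hC2W ⟨z, hz⟩ hu hv
    apply hz
    have hle : Submodule.span K ({u0} : Set L) ⊔ (Submodule.span K ({v0} : Set L) ⊔ F7.lcsS K L 1) ≤ W := by
      refine sup_le ((Submodule.span_singleton_le_iff_mem _ _).mpr hu)
        (sup_le ((Submodule.span_singleton_le_iff_mem _ _).mpr hv) ?_)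
      intro c hc
      exact hC2W c ((LieSubmodule.mem_toSubmodule _).mp hc)
    rw [hspan_pair] at hle
    exact hle Submodule.mem_top
  have hexcl : ∀ (W : Submodule K L), (∀ c ∈ LieModule.lowerCentralSeries K L L 1, c ∈ W) →
      (∃ z, z ∉ W) →
      (¬(u0 ∈ W ∧ v0 ∈ W)) ∧ (¬(u0 ∈ W ∧ u0 + v0 ∈ W)) ∧
      (¬(u0 ∈ W ∧ u0 + (2:K) • v0 ∈ W)) ∧ (¬(v0 ∈ W ∧ u0 + v0 ∈ W)) ∧
      (¬(v0 ∈ W ∧ u0 + (2:K) • v0 ∈ W)) ∧ (¬(u0 + v0 ∈ W ∧ u0 + (2:K) • v0 ∈ W)) := by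
    intro W hC2W hex
    refine ⟨fun ⟨h1, h2⟩ => hWpair W hC2W hex h1 h2, fun ⟨h1, h2⟩ => ?_,
      fun ⟨h1, h2⟩ => ?_, fun ⟨h1, h2⟩ => ?_, fun ⟨h1, h2⟩ => ?_, fun ⟨h1, h2⟩ => ?_⟩
    · have hv : v0 ∈ W := by
        have : v0 = (u0 + v0) - u0 := by abel
        rw [this]; exact sub_mem h2 h1
      exact hWpair W hC2W hex h1 hv
    · have hv : v0 ∈ W := by
        have h' : (2:K) • v0 = (u0 + (2:K) • v0) - u0 := by abel
        have hmem : (2:K) • v0 ∈ W := by rw [h']; exact sub_mem h2 h1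
        have : v0 = (2:K)⁻¹ • ((2:K) • v0) := (inv_smul_smul₀ h2K v0).symm
        rw [this]; exact SMulMemClass.smul_mem _ hmem
      exact hWpair W hC2W hex h1 hv
    · have hu : u0 ∈ W := by
        have : u0 = (u0 + v0) - v0 := by abel
        rw [this]; exact sub_mem h2 h1
      exact hWpair W hC2W hex hu h1
    · have hu : u0 ∈ W := by
        have : u0 = (u0 + (2:K) • v0) - (2:K) • v0 := by abel
        rw [this]; exact sub_mem h2 (SMulMemClass.smul_mem _ h1)
      exact hWpair W hC2W hex hu h1
    · have hv : v0 ∈ W := by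
        have : v0 = (u0 + (2:K) • v0) - (u0 + v0) := by
          rw [two_smul]; abel
        rw [this]; exact sub_mem h2 h1
      have hu : u0 ∈ W := by
        have : u0 = (u0 + v0) - v0 := by abel
        rw [this]; exact sub_mem h1 hv
      exact hWpair W hC2W hex hu hv
  obtain ⟨e3a, e3b, e3c, e3d, e3e, e3f⟩ := hexcl S3 hC2S3 ⟨u0, hu0S3⟩
  obtain ⟨e4a, e4b, e4c, e4d, e4e, e4f⟩ := hexcl S4 hC2S4 hS4ex
  obtain ⟨e5a, e5b, e5c, e5d, e5e, e5f⟩ := hexcl S5 hC2S5 hS5ex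
  -- pigeonhole: one of the four candidates avoids S3, S4 and S5
  have hget : ∃ e : L, e ∉ S3 ∧ e ∉ S4 ∧ e ∉ S5 := by
    by_contra hcon
    push_neg at hcon
    have d1 : u0 ∈ S3 ∨ u0 ∈ S4 ∨ u0 ∈ S5 := by
      by_contra hd; push_neg at hd
      exact hd.2.2 (hcon u0 hd.1 hd.2.1)
    have d2 : v0 ∈ S3 ∨ v0 ∈ S4 ∨ v0 ∈ S5 := by
      by_contra hd; push_neg at hd
      exact hd.2.2 (hcon v0 hd.1 hd.2.1)
    have d3 : u0 + v0 ∈ S3 ∨ u0 + v0 ∈ S4 ∨ u0 + v0 ∈ S5 := by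
      by_contra hd; push_neg at hd
      exact hd.2.2 (hcon _ hd.1 hd.2.1)
    have d4 : u0 + (2:K) • v0 ∈ S3 ∨ u0 + (2:K) • v0 ∈ S4 ∨ u0 + (2:K) • v0 ∈ S5 := by
      by_contra hd; push_neg at hd
      exact hd.2.2 (hcon _ hd.1 hd.2.1)
    exact F7.pigeon e3a e3b e3c e3d e3e e3f e4a e4b e4c e4d e4e e4f
      e5a e5b e5c e5d e5e e5f d1 d2 d3 d4
  obtain ⟨e1, he1S3, he1S4, he1S5⟩ := hget
  have he13 : ⁅e1, w5⁆ ∉ LieModule.lowerCentralSeries K L L 4 :=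
    fun h => he1S3 (hS3mem.mpr h)
  have he14 : ⁅e1, w4⁆ ∉ LieModule.lowerCentralSeries K L L 5 :=
    fun h => he1S4 (hS4mem.mpr h)
  have he15 : ⁅e1, w3⁆ ∉ LieModule.lowerCentralSeries K L L 6 :=
    fun h => he1S5 (hS5mem.mpr h)
  have he12 : ⁅e1, w6⁆ ∉ LieModule.lowerCentralSeries K L L 3 :=
    fun h => he13 (F7.S2_le_S3 hdim h5 h4 h3 hw6 hw6' hw5 hw5' h)
  have he1C2 : e1 ∉ LieModule.lowerCentralSeries K L L 1 := fun h => he1S3 (hC2S3 e1 h)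
  -- a complementary direction
  obtain ⟨y, hyT, hy⟩ := F7.exists_mem_notMem (W := (⊤ : Submodule K L))
    (W' := Submodule.span K ({e1} : Set L) ⊔ F7.lcsS K L 1)
    (by have := F7.rank_sup_le (L := L) h5 e1; rw [finrank_top, hdim]; omega)
  clear hyT
  have hdecTop := F7.top_decomp hdim h5 he1C2 hy
  -- the chain
  set E6 : L := ⁅e1, y⁆ with hE6def
  have hE6m : E6 ∈ LieModule.lowerCentralSeries K L L 1 := F7.lie_mem_succ e1 (F7.mem_top y)
  have hE6n : E6 ∉ LieModule.lowerCentralSeries K L L 2 := F7.bracket_notin hdim h5 h4 he1C2 hy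
  set E5 : L := ⁅e1, E6⁆ with hE5def
  have hE5m : E5 ∈ LieModule.lowerCentralSeries K L L 2 := F7.lie_mem_succ e1 hE6m
  have hE5n : E5 ∉ LieModule.lowerCentralSeries K L L 3 :=
    F7.transfer_not hw6 hE6m hE6n hr1 he12
  set E4 : L := ⁅e1, E5⁆ with hE4def
  have hE4m : E4 ∈ LieModule.lowerCentralSeries K L L 3 := F7.lie_mem_succ e1 hE5m
  have hE4n : E4 ∉ LieModule.lowerCentralSeries K L L 4 :=
    F7.transfer_not hw5 hE5m hE5n hr2 he13
  set E3 : L := ⁅e1, E4⁆ with hE3def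
  have hE3m : E3 ∈ LieModule.lowerCentralSeries K L L 4 := F7.lie_mem_succ e1 hE4m
  have hE3n : E3 ∉ LieModule.lowerCentralSeries K L L 5 :=
    F7.transfer_not hw4 hE4m hE4n hr3 he14
  set E2 : L := ⁅e1, E3⁆ with hE2def
  have hE2m : E2 ∈ LieModule.lowerCentralSeries K L L 5 := F7.lie_mem_succ e1 hE3m
  have hE2n : E2 ∉ LieModule.lowerCentralSeries K L L 6 :=
    F7.transfer_not hw3 hE3m hE3n hr4 he15
  have hE2ne : E2 ≠ 0 := fun h => hE2n (h ▸ zero_mem _)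
  -- decompositions along the chain
  have d1 := F7.decomp hE6m hE6n hr1
  have d2 := F7.decomp hE5m hE5n hr2
  have d3 := F7.decomp hE4m hE4n hr3
  have d4 := F7.decomp hE3m hE3n hr4
  have d5 := F7.decomp hE2m hE2n hr5
  have cor3 : ∀ m ∈ LieModule.lowerCentralSeries K L L 2, ∃ p q r s : K,
      m = p • E5 + (q • E4 + (r • E3 + s • E2)) := by
    intro m hm
    obtain ⟨p, z2, hz2, rfl⟩ := d2 m hm
    obtain ⟨q, z3, hz3, rfl⟩ := d3 z2 hz2
    obtain ⟨r, z4, hz4, rfl⟩ := d4 z3 hz3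
    obtain ⟨s, z5, hz5, rfl⟩ := d5 z4 hz4
    exact ⟨p, q, r, s, by rw [hbot z5 hz5, add_zero]⟩
  have cor4 : ∀ m ∈ LieModule.lowerCentralSeries K L L 3, ∃ q r s : K,
      m = q • E4 + (r • E3 + s • E2) := by
    intro m hm
    obtain ⟨q, z3, hz3, rfl⟩ := d3 m hm
    obtain ⟨r, z4, hz4, rfl⟩ := d4 z3 hz3
    obtain ⟨s, z5, hz5, rfl⟩ := d5 z4 hz4
    exact ⟨q, r, s, by rw [hbot z5 hz5, add_zero]⟩
  have cor5 : ∀ m ∈ LieModule.lowerCentralSeries K L L 4, ∃ r s : K,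
      m = r • E3 + s • E2 := by
    intro m hm
    obtain ⟨r, z4, hz4, rfl⟩ := d4 m hm
    obtain ⟨s, z5, hz5, rfl⟩ := d5 z4 hz4
    exact ⟨r, s, by rw [hbot z5 hz5, add_zero]⟩
  have cor6 : ∀ m ∈ LieModule.lowerCentralSeries K L L 5, ∃ s : K, m = s • E2 := by
    intro m hm
    obtain ⟨s, z5, hz5, rfl⟩ := d5 m hm
    exact ⟨s, by rw [hbot z5 hz5, add_zero]⟩
  -- uniqueness of coordinates
  have coeff_zero : ∀ {n : ℕ} {v x : L}, v ∉ LieModule.lowerCentralSeries K L L n →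
      x ∈ LieModule.lowerCentralSeries K L L n → ∀ {p : K}, p • v = x → p = 0 := by
    intro n v x hv hx p hp
    by_contra hp0
    apply hv
    have : v = p⁻¹ • x := by rw [← hp, inv_smul_smul₀ hp0]
    rw [this]
    exact SMulMemClass.smul_mem _ hx
  have uniq : ∀ p q r s : K, p • E5 + (q • E4 + (r • E3 + s • E2)) = 0 →
      p = 0 ∧ q = 0 ∧ r = 0 ∧ s = 0 := by
    intro p q r s h
    have hE4m3 : E4 ∈ LieModule.lowerCentralSeries K L L 3 := hE4m
    have hE3m3 : E3 ∈ LieModule.lowerCentralSeries K L L 3 := hmono (by norm_num) hE3m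
    have hE2m3 : E2 ∈ LieModule.lowerCentralSeries K L L 3 := hmono (by norm_num) hE2m
    have hp : p = 0 := by
      have h' : p • E5 = -(q • E4 + (r • E3 + s • E2)) := by
        rw [eq_neg_iff_add_eq_zero]; exact h
      exact coeff_zero hE5n (neg_mem (add_mem (SMulMemClass.smul_mem _ hE4m3)
        (add_mem (SMulMemClass.smul_mem _ hE3m3) (SMulMemClass.smul_mem _ hE2m3)))) h'
    subst hp
    rw [zero_smul, zero_add] at h
    have hE3m4 : E3 ∈ LieModule.lowerCentralSeries K L L 4 := hE3m
    have hE2m4 : E2 ∈ LieModule.lowerCentralSeries K L L 4 := hmono (by norm_num) hE2m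
    have hq : q = 0 := by
      have h' : q • E4 = -(r • E3 + s • E2) := by
        rw [eq_neg_iff_add_eq_zero]; exact h
      exact coeff_zero hE4n (neg_mem (add_mem (SMulMemClass.smul_mem _ hE3m4) (SMulMemClass.smul_mem _ hE2m4))) h'
    subst hq
    rw [zero_smul, zero_add] at h
    have hr : r = 0 := by
      have h' : r • E3 = -(s • E2) := by
        rw [eq_neg_iff_add_eq_zero]; exact h
      exact coeff_zero hE3n (neg_mem (SMulMemClass.smul_mem _ hE2m)) h'
    subst hr
    rw [zero_smul, zero_add] at h
    rcases smul_eq_zero.mp h with hs | hs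
    · exact ⟨rfl, rfl, rfl, hs⟩
    · exact absurd hs hE2ne
  -- structure constants
  obtain ⟨A5, A4, A3, A2, hA⟩ := cor3 ⁅y, E6⁆ (F7.lie_mem_add (F7.mem_top y) hE6m)
  obtain ⟨B4, B3, B2, hB⟩ := cor4 ⁅y, E5⁆ (F7.lie_mem_add (F7.mem_top y) hE5m)
  obtain ⟨G3, G2, hG⟩ := cor5 ⁅y, E4⁆ (F7.lie_mem_add (F7.mem_top y) hE4m)
  obtain ⟨H2, hH⟩ := cor6 ⁅y, E3⁆ (F7.lie_mem_add (F7.mem_top y) hE3m)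
  obtain ⟨P3, P2, hP⟩ := cor5 ⁅E6, E5⁆ (F7.lie_mem_add hE6m hE5m)
  obtain ⟨Q2, hQ⟩ := cor6 ⁅E6, E4⁆ (F7.lie_mem_add hE6m hE4m)
  -- zero brackets
  have hz_e1E2 : ⁅e1, E2⁆ = 0 := hzero (F7.mem_top e1) hE2m (by norm_num)
  have hz_yE2 : ⁅y, E2⁆ = 0 := hzero (F7.mem_top y) hE2m (by norm_num)
  have hz_E6E3 : ⁅E6, E3⁆ = 0 := hzero hE6m hE3m (by norm_num)
  have hz_E6E2 : ⁅E6, E2⁆ = 0 := hzero hE6m hE2m (by norm_num)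
  have hz_E5E4 : ⁅E5, E4⁆ = 0 := hzero hE5m hE4m (by norm_num)
  have hz_E5E3 : ⁅E5, E3⁆ = 0 := hzero hE5m hE3m (by norm_num)
  have hz_E5E2 : ⁅E5, E2⁆ = 0 := hzero hE5m hE2m (by norm_num)
  have hz_E4E3 : ⁅E4, E3⁆ = 0 := hzero hE4m hE3m (by norm_num)
  have hz_E4E2 : ⁅E4, E2⁆ = 0 := hzero hE4m hE2m (by norm_num)
  have hz_E3E2 : ⁅E3, E2⁆ = 0 := hzero hE3m hE2m (by norm_num)
  have hz_E4E5 : ⁅E4, E5⁆ = 0 := hzero hE4m hE5m (by norm_num)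
  have hz_E3E5 : ⁅E3, E5⁆ = 0 := hzero hE3m hE5m (by norm_num)
  have hz_E2E5 : ⁅E2, E5⁆ = 0 := hzero hE2m hE5m (by norm_num)
  have hz_E6E4 : True := trivial
  -- Jacobi identity computations
  -- J1 : ⁅e1,⁅y,E6⁆⁆ = ⁅⁅e1,y⁆,E6⁆ + ⁅y,⁅e1,E6⁆⁆
  have J1 : A5 • E4 + (A4 • E3 + A3 • E2) = B4 • E4 + (B3 • E3 + B2 • E2) := by
    have hj := leibniz_lie e1 y E6
    rw [← hE6def, lie_self, zero_add, ← hE5def, hB] at hj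
    rw [hA] at hj
    rw [lie_add, lie_add, lie_add, lie_smul, lie_smul, lie_smul, lie_smul,
      ← hE4def, ← hE3def, ← hE2def, hz_e1E2, smul_zero, add_zero] at hj
    exact hj
  have rel1 : A5 = B4 ∧ A4 = B3 ∧ A3 = B2 := by
    have h0 : (0:K) • E5 + ((A5 - B4) • E4 + ((A4 - B3) • E3 + (A3 - B2) • E2)) = 0 := by
      have := J1
      rw [zero_smul, zero_add, sub_smul, sub_smul, sub_smul]
      rw [show A5 • E4 - B4 • E4 + (A4 • E3 - B3 • E3 + (A3 • E2 - B2 • E2)) =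
        (A5 • E4 + (A4 • E3 + A3 • E2)) - (B4 • E4 + (B3 • E3 + B2 • E2)) by abel, this,
        sub_self]
    obtain ⟨-, hq, hr, hs⟩ := uniq _ _ _ _ h0
    exact ⟨sub_eq_zero.mp hq, sub_eq_zero.mp hr, sub_eq_zero.mp hs⟩
  -- J2 : ⁅e1,⁅y,E5⁆⁆ = ⁅⁅e1,y⁆,E5⁆ + ⁅y,⁅e1,E5⁆⁆
  have J2 : B4 • E3 + B3 • E2 = (P3 • E3 + P2 • E2) + (G3 • E3 + G2 • E2) := by
    have hj := leibniz_lie e1 y E5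
    rw [← hE6def, ← hE4def, hP, hG] at hj
    rw [hB] at hj
    rw [lie_add, lie_add, lie_smul, lie_smul, lie_smul,
      ← hE3def, ← hE2def, hz_e1E2, smul_zero, add_zero] at hj
    exact hj
  have rel2 : B4 = P3 + G3 ∧ B3 = P2 + G2 := by
    have h0 : (0:K) • E5 + ((0:K) • E4 + ((B4 - (P3 + G3)) • E3 + (B3 - (P2 + G2)) • E2)) = 0 := by
      rw [zero_smul, zero_add, zero_smul, zero_add, sub_smul, sub_smul, add_smul, add_smul]
      rw [show B4 • E3 - (P3 • E3 + G3 • E3) + (B3 • E2 - (P2 • E2 + G2 • E2)) =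
        (B4 • E3 + B3 • E2) - ((P3 • E3 + P2 • E2) + (G3 • E3 + G2 • E2)) by abel, J2,
        sub_self]
    obtain ⟨-, -, hr, hs⟩ := uniq _ _ _ _ h0
    exact ⟨sub_eq_zero.mp hr, sub_eq_zero.mp hs⟩
  -- J3 : ⁅e1,⁅y,E4⁆⁆ = ⁅⁅e1,y⁆,E4⁆ + ⁅y,⁅e1,E4⁆⁆
  have J3 : G3 • E2 = Q2 • E2 + H2 • E2 := by
    have hj := leibniz_lie e1 y E4
    rw [← hE6def, ← hE3def, hQ, hH] at hj
    rw [hG] at hj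
    rw [lie_add, lie_smul, lie_smul, ← hE2def, hz_e1E2, smul_zero, add_zero] at hj
    exact hj
  have rel3 : G3 = Q2 + H2 := by
    have h0 : (0:K) • E5 + ((0:K) • E4 + ((0:K) • E3 + (G3 - (Q2 + H2)) • E2)) = 0 := by
      rw [zero_smul, zero_add, zero_smul, zero_add, zero_smul, zero_add, sub_smul, add_smul]
      rw [show G3 • E2 - (Q2 • E2 + H2 • E2) = G3 • E2 - (Q2 • E2 + H2 • E2) from rfl, J3]
      abel
    obtain ⟨-, -, -, hs⟩ := uniq _ _ _ _ h0
    exact sub_eq_zero.mp hs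
  -- J4 : ⁅e1,⁅E6,E5⁆⁆ = ⁅⁅e1,E6⁆,E5⁆ + ⁅E6,⁅e1,E5⁆⁆
  have J4 : P3 • E2 = Q2 • E2 := by
    have hj := leibniz_lie e1 E6 E5
    rw [← hE5def, lie_self, zero_add, ← hE4def, hQ] at hj
    rw [hP] at hj
    rw [lie_add, lie_smul, lie_smul, ← hE2def, hz_e1E2, smul_zero, add_zero] at hj
    exact hj
  have rel4 : P3 = Q2 := by
    have h0 : (0:K) • E5 + ((0:K) • E4 + ((0:K) • E3 + (P3 - Q2) • E2)) = 0 := by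
      rw [zero_smul, zero_add, zero_smul, zero_add, zero_smul, zero_add, sub_smul, J4, sub_self]
    obtain ⟨-, -, -, hs⟩ := uniq _ _ _ _ h0
    exact sub_eq_zero.mp hs
  -- J5 : ⁅y,⁅E6,E5⁆⁆ = ⁅⁅y,E6⁆,E5⁆ + ⁅E6,⁅y,E5⁆⁆
  have J5 : (P3 * H2) • E2 = (B4 * Q2) • E2 := by
    have hj := leibniz_lie y E6 E5
    rw [hP, hA, hB] at hj
    rw [lie_add, lie_smul, lie_smul, hH, hz_yE2, smul_zero, add_zero, smul_smul] at hj
    rw [add_lie, add_lie, add_lie, smul_lie, smul_lie, smul_lie, smul_lie,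
      lie_self, hz_E4E5, hz_E3E5, hz_E2E5, smul_zero, smul_zero, smul_zero, smul_zero,
      add_zero, add_zero, add_zero] at hj
    rw [lie_add, lie_add, lie_smul, lie_smul, lie_smul, hQ, hz_E6E3, hz_E6E2,
      smul_zero, smul_zero, add_zero, add_zero, smul_smul, zero_add] at hj
    exact hj
  have rel5 : P3 * H2 = B4 * Q2 := by
    have h0 : (0:K) • E5 + ((0:K) • E4 + ((0:K) • E3 + (P3 * H2 - B4 * Q2) • E2)) = 0 := by
      rw [zero_smul, zero_add, zero_smul, zero_add, zero_smul, zero_add, sub_smul, J5, sub_self]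
    obtain ⟨-, -, -, hs⟩ := uniq _ _ _ _ h0
    exact sub_eq_zero.mp hs
  -- char ≠ 2 : P3 = 0
  have hP3 : P3 = 0 := by
    have hB4 : B4 = 2 * P3 + H2 := by
      have := rel2.1
      rw [rel3, ← rel4] at this
      rw [this]; ring
    have h2P : (2:K) * (P3 * P3) = 0 := by
      have := rel5
      rw [hB4, ← rel4] at this
      linear_combination -this
    rcases mul_eq_zero.mp h2P with h | h
    · exact absurd h h2K
    · exact mul_self_eq_zero.mp h
  have hQ2 : Q2 = 0 := by rw [← rel4, hP3]
  have hG3 : G3 = H2 := by rw [rel3, hQ2, zero_add]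
  have hB4 : B4 = H2 := by rw [rel2.1, hP3, zero_add, hG3]
  have hA5 : A5 = H2 := by rw [rel1.1, hB4]
  -- the normalized seventh basis vector
  set y7 : L := y - A5 • e1 with hy7def
  -- the four structure constants
  set aa : K := -G2 with haa
  set bb : K := -P2 with hbb
  set cc : K := -A3 with hcc
  set dd : K := -A2 with hdd
  have habsum : aa + bb = -A4 := by
    rw [haa, hbb, rel1.2.1, rel2.2]; ring
  -- the bracket table
  have T06 : ⁅e1, y7⁆ = E6 := by
    rw [hy7def, lie_sub, lie_smul, lie_self, smul_zero, sub_zero, ← hE6def]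
  have T05 : ⁅e1, E6⁆ = E5 := hE5def.symm
  have T04 : ⁅e1, E5⁆ = E4 := hE4def.symm
  have T03 : ⁅e1, E4⁆ = E3 := hE3def.symm
  have T02 : ⁅e1, E3⁆ = E2 := hE2def.symm
  have T01 : ⁅e1, E2⁆ = 0 := hz_e1E2
  have hyE6 : ⁅y7, E6⁆ = A4 • E4 + (A3 • E3 + A2 • E2) := by
    rw [hy7def, sub_lie, smul_lie, hA, ← hE5def]
    abel
  have hyE5 : ⁅y7, E5⁆ = B3 • E3 + B2 • E2 := by
    rw [hy7def, sub_lie, smul_lie, hB, ← hE4def, hB4, hA5]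
    abel
  have hyE4 : ⁅y7, E4⁆ = G2 • E2 := by
    rw [hy7def, sub_lie, smul_lie, hG, ← hE3def, hG3, hA5]
    abel
  have hyE3 : ⁅y7, E3⁆ = 0 := by
    rw [hy7def, sub_lie, smul_lie, hH, ← hE2def, hA5]
    abel
  have T36 : ⁅E4, y7⁆ = aa • E2 := by
    rw [← lie_skew, hyE4, haa, neg_smul]
  have T46 : ⁅E5, y7⁆ = cc • E2 + (aa + bb) • E3 := by
    rw [← lie_skew, hyE5, hcc, habsum, rel1.2.1, rel1.2.2, neg_smul, neg_smul]
    abel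
  have T56 : ⁅E6, y7⁆ = dd • E2 + cc • E3 + (aa + bb) • E4 := by
    rw [← lie_skew, hyE6, hdd, hcc, habsum, neg_smul, neg_smul, neg_smul]
    abel
  have T45 : ⁅E5, E6⁆ = bb • E2 := by
    rw [← lie_skew, hP, hP3, hbb]
    rw [zero_smul, zero_add, neg_smul]
  have T35 : ⁅E4, E6⁆ = 0 := by
    rw [← lie_skew, hQ, hQ2, zero_smul, neg_zero]
  have T34 : ⁅E4, E5⁆ = 0 := hz_E4E5
  have T16 : ⁅E2, y7⁆ = 0 := by
    rw [hy7def, lie_sub, lie_smul]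
    rw [show ⁅E2, y⁆ = 0 from hzero hE2m (F7.mem_top y) (by norm_num),
      show ⁅E2, e1⁆ = 0 from hzero hE2m (F7.mem_top e1) (by norm_num), smul_zero, sub_zero]
  have T26 : ⁅E3, y7⁆ = 0 := by
    rw [← lie_skew, hyE3, neg_zero]
  have T12 : ⁅E2, E3⁆ = 0 := hzero hE2m hE3m (by norm_num)
  have T13 : ⁅E2, E4⁆ = 0 := hzero hE2m hE4m (by norm_num)
  have T14 : ⁅E2, E5⁆ = 0 := hz_E2E5
  have T15 : ⁅E2, E6⁆ = 0 := hzero hE2m hE6m (by norm_num)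
  have T23 : ⁅E3, E4⁆ = 0 := hzero hE3m hE4m (by norm_num)
  have T24 : ⁅E3, E5⁆ = 0 := hz_E3E5
  have T25 : ⁅E3, E6⁆ = 0 := hzero hE3m hE6m (by norm_num)
  -- the basis
  have hy7span : y = y7 + A5 • e1 := by rw [hy7def]; abel
  set bvec : Fin 7 → L := ![e1, E2, E3, E4, E5, E6, y7] with hbvec
  have hb0 : bvec 0 = e1 := rfl
  have hb1 : bvec 1 = E2 := rfl
  have hb2 : bvec 2 = E3 := rfl
  have hb3 : bvec 3 = E4 := rfl
  have hb4 : bvec 4 = E5 := rfl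
  have hb5 : bvec 5 = E6 := rfl
  have hb6 : bvec 6 = y7 := rfl
  have hspan : ⊤ ≤ Submodule.span K (Set.range bvec) := by
    have hmem : ∀ i, bvec i ∈ Submodule.span K (Set.range bvec) :=
      fun i => Submodule.subset_span ⟨i, rfl⟩
    have hC5span : ∀ m ∈ LieModule.lowerCentralSeries K L L 5,
        m ∈ Submodule.span K (Set.range bvec) := by
      intro m hm
      obtain ⟨s, rfl⟩ := cor6 m hm
      exact Submodule.smul_mem _ _ (hmem 1)
    have hC4span : ∀ m ∈ LieModule.lowerCentralSeries K L L 4,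
        m ∈ Submodule.span K (Set.range bvec) := by
      intro m hm
      obtain ⟨r, z, hz, rfl⟩ := d4 m hm
      exact Submodule.add_mem _ (Submodule.smul_mem _ _ (hmem 2)) (hC5span z hz)
    have hC3span : ∀ m ∈ LieModule.lowerCentralSeries K L L 3,
        m ∈ Submodule.span K (Set.range bvec) := by
      intro m hm
      obtain ⟨r, z, hz, rfl⟩ := d3 m hm
      exact Submodule.add_mem _ (Submodule.smul_mem _ _ (hmem 3)) (hC4span z hz)
    have hC2span : ∀ m ∈ LieModule.lowerCentralSeries K L L 2,
        m ∈ Submodule.span K (Set.range bvec) := by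
      intro m hm
      obtain ⟨r, z, hz, rfl⟩ := d2 m hm
      exact Submodule.add_mem _ (Submodule.smul_mem _ _ (hmem 4)) (hC3span z hz)
    have hC1span : ∀ m ∈ LieModule.lowerCentralSeries K L L 1,
        m ∈ Submodule.span K (Set.range bvec) := by
      intro m hm
      obtain ⟨r, z, hz, rfl⟩ := d1 m hm
      exact Submodule.add_mem _ (Submodule.smul_mem _ _ (hmem 5)) (hC2span z hz)
    intro z _
    obtain ⟨α, β, c, hc, rfl⟩ := hdecTop z
    refine Submodule.add_mem _ (Submodule.add_mem _ ?_ ?_) (hC1span c hc)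
    · exact Submodule.smul_mem _ _ (hmem 0)
    · have : y ∈ Submodule.span K (Set.range bvec) := by
        rw [hy7span]
        exact Submodule.add_mem _ (hmem 6) (Submodule.smul_mem _ _ (hmem 0))
      exact Submodule.smul_mem _ _ this
  have hcard : Fintype.card (Fin 7) = finrank K L := by simp [hdim]
  set B : Basis (Fin 7) K L := basisOfTopLeSpanOfCardEqFinrank bvec hspan hcard with hBdef
  have hBc : ∀ i, B i = bvec i := fun i =>
    congrFun (coe_basisOfTopLeSpanOfCardEqFinrank bvec hspan hcard) i
  have hmain := F7.final aa bb cc dd e1 E2 E3 E4 E5 E6 y7 B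
    ((hBc 0).trans hb0) ((hBc 1).trans hb1) ((hBc 2).trans hb2) ((hBc 3).trans hb3)
    ((hBc 4).trans hb4) ((hBc 5).trans hb5) ((hBc 6).trans hb6)
    T01 T02 T03 T04 T05 T06 T12 T13 T14 T15 T16 T23 T24 T25 T26 T34 T35 T36 T45 T46 T56
  exact ⟨aa, bb, cc, dd, B.equivFun, hmain⟩
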